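/- Let m ≥ 4 and 5m/4 − 1 < n ≤ 3m/2 − 2. Then R(F_n, F_m) ≥ 2n + 3m − 2, where F_k = K_1 + kK_2 is the fan. -/

import Mathlib

open SimpleGraph

/-- `H` is contained in `G` as a subgraph. -/
def Contains {α β : Type*} (G : SimpleGraph α) (H : SimpleGraph β) : Prop :=
  ∃ f : H →g G, Function.Injective f

/-- Every red/blue coloring of `K_N` (red = `C`, blue = `Cᶜ`) has a red `G` or blue `H`. -/
def RamseyProp {α β : Type*} (N : ℕ) (G : SimpleGraph α) (H : SimpleGraph β) : Prop :=
  ∀ C : SimpleGraph (Fin N), Contains C G ∨ Contains Cᶜ H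

/-- The Ramsey number `R(G, H)`. -/
noncomputable def ramseyNumber {α β : Type*} (G : SimpleGraph α) (H : SimpleGraph β) : ℕ :=
  sInf {N | RamseyProp N G H}

/-- The join `G + H`: disjoint union plus all edges in between. -/
def graphJoin {α β : Type*} (G : SimpleGraph α) (H : SimpleGraph β) : SimpleGraph (α ⊕ β) :=
  SimpleGraph.fromRel (fun x y =>
    match x, y with
    | Sum.inl a, Sum.inl b => G.Adj a b
    | Sum.inr a, Sum.inr b => H.Adj a b
    | _, _ => True)

/-- The wheel `W_n = K_1 + C_{n-1}` on `n` vertices. -/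
def wheel (n : ℕ) : SimpleGraph (Fin 1 ⊕ Fin (n - 1)) :=
  graphJoin ⊥ (SimpleGraph.cycleGraph (n - 1))

/-- A perfect matching `k • K_2` on `2k` vertices. -/
def matching (k : ℕ) : SimpleGraph (Fin k × Fin 2) :=
  SimpleGraph.fromRel (fun x y => x.1 = y.1)

/-- The fan `F_k = K_1 + k • K_2`. -/
def fan (k : ℕ) : SimpleGraph (Fin 1 ⊕ Fin k × Fin 2) :=
  graphJoin ⊥ (matching k)

/-- The kipas `K̂_n = K_1 + P_{n-1}` on `n` vertices. -/
def kipas (n : ℕ) : SimpleGraph (Fin 1 ⊕ Fin (n - 1)) :=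
  graphJoin ⊥ (SimpleGraph.pathGraph (n - 1))

/-- The blow-up `G[K_2]`: each vertex replaced by an adjacent pair; vertices in
different pairs adjacent iff the original vertices are adjacent. -/
def blowUp {α : Type*} (G : SimpleGraph α) : SimpleGraph (α × Fin 2) :=
  SimpleGraph.fromRel (fun x y => x.1 = y.1 ∨ G.Adj x.1 y.1)


section RamseyAux
open SimpleGraph Finset


lemma isNClique_of_induce {V : Type} [DecidableEq V] {C : SimpleGraph V} {A : Set V} {k : ℕ}
    {S : Finset A} (h : (C.induce A).IsNClique k S) :
    C.IsNClique k (S.image Subtype.val) := by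
  constructor
  · intro a ha b hb hab
    simp only [coe_image, Set.mem_image, mem_coe] at ha hb
    obtain ⟨a', ha', rfl⟩ := ha
    obtain ⟨b', hb', rfl⟩ := hb
    exact h.1 ha' hb' (fun e => hab (congrArg _ e))
  · rw [Finset.card_image_of_injective _ Subtype.val_injective, h.2]

lemma compl_induce {V : Type} (C : SimpleGraph V) (A : Set V) :
    (C.induce A)ᶜ = Cᶜ.induce A := by
  ext a b
  simp only [compl_adj, comap_adj, Function.Embedding.coe_subtype]
  constructor
  · rintro ⟨hne, hn⟩; exact ⟨fun e => hne (Subtype.ext e), hn⟩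
  · rintro ⟨hne, hn⟩; exact ⟨fun e => hne (congrArg _ e), hn⟩

-- clique Ramsey existence
lemma ramsey_exists (s t : ℕ) : ∃ N : ℕ, ∀ (V : Type) [Fintype V] [DecidableEq V],
    N ≤ Fintype.card V → ∀ (C : SimpleGraph V) [DecidableRel C.Adj],
    (∃ S, C.IsNClique s S) ∨ (∃ S, Cᶜ.IsNClique t S) := by
  induction s generalizing t with
  | zero => exact ⟨0, fun V _ _ _ C _ => Or.inl ⟨∅, by simp⟩⟩
  | succ s ihs =>
    induction t with
    | zero => exact ⟨0, fun V _ _ _ C _ => Or.inr ⟨∅, by simp⟩⟩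
    | succ t iht =>
      obtain ⟨Na, hNa⟩ := ihs (t+1)
      obtain ⟨Nb, hNb⟩ := iht
      refine ⟨Na + Nb + 1, fun V _ _ hV C _ => ?_⟩
      have hpos : 0 < Fintype.card V := by omega
      obtain ⟨v⟩ := Fintype.card_pos_iff.mp hpos
      classical
      set A := C.neighborFinset v with hA
      set B := Cᶜ.neighborFinset v with hB
      have hcover : ∀ x : V, x ≠ v → x ∈ A ∨ x ∈ B := by
        intro x hx
        by_cases h : C.Adj v x
        · exact Or.inl (by simp [hA, mem_neighborFinset, h])
        · refine Or.inr ?_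
          rw [hB, mem_neighborFinset, compl_adj]
          exact ⟨fun hvx => hx hvx.symm, h⟩
      have hcard : Fintype.card V ≤ A.card + B.card + 1 := by
        have : (Finset.univ : Finset V) ⊆ insert v (A ∪ B) := by
          intro x _
          by_cases hx : x = v
          · simp [hx]
          · rcases hcover x hx with h | h <;> simp [h]
        calc Fintype.card V = (Finset.univ : Finset V).card := by simp
          _ ≤ (insert v (A ∪ B)).card := Finset.card_le_card this
          _ ≤ (A ∪ B).card + 1 := Finset.card_insert_le _ _
          _ ≤ A.card + B.card + 1 := by
              have := Finset.card_union_le A B; omega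
      have hsplit : Na ≤ A.card ∨ Nb ≤ B.card := by omega
      rcases hsplit with hs | hs
      · have hcardA : Na ≤ Fintype.card ↥(↑A : Set V) := by
          simpa using hs
        rcases hNa ↥(↑A : Set V) hcardA (C.induce ↑A) with ⟨S, hS⟩ | ⟨S, hS⟩
        · left
          refine ⟨insert v (S.image Subtype.val), (isNClique_of_induce hS).insert ?_⟩
          intro b hb
          simp only [mem_image] at hb
          obtain ⟨⟨b', hb'⟩, _, rfl⟩ := hb
          rw [hA] at hb'
          exact (mem_neighborFinset _ _ _).mp (by exact_mod_cast hb')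
        · right
          rw [compl_induce] at hS
          exact ⟨_, isNClique_of_induce hS⟩
      · have hcardB : Nb ≤ Fintype.card ↥(↑B : Set V) := by
          simpa using hs
        rcases hNb ↥(↑B : Set V) hcardB (C.induce ↑B) with ⟨S, hS⟩ | ⟨S, hS⟩
        · left
          exact ⟨_, isNClique_of_induce hS⟩
        · right
          rw [compl_induce] at hS
          refine ⟨insert v (S.image Subtype.val), (isNClique_of_induce hS).insert ?_⟩
          intro b hb
          simp only [mem_image] at hb
          obtain ⟨⟨b', hb'⟩, _, rfl⟩ := hb
          rw [hB] at hb'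
          exact (mem_neighborFinset _ _ _).mp (by exact_mod_cast hb')

lemma fan_adj_hub (k : ℕ) (p : Fin k × Fin 2) : (fan k).Adj (Sum.inl 0) (Sum.inr p) := by
  simp [fan, graphJoin, SimpleGraph.fromRel_adj]

lemma fan_adj_pair (k : ℕ) (i : Fin k) : (fan k).Adj (Sum.inr (i,0)) (Sum.inr (i,1)) := by
  simp [fan, graphJoin, matching, SimpleGraph.fromRel_adj]

lemma contains_fan_of_clique {N k : ℕ} {C : SimpleGraph (Fin N)} {S : Finset (Fin N)}
    (hS : C.IsNClique (2*k+1) S) : Contains C (fan k) := by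
  have hcard := hS.2
  set g : Fin (2*k+1) → Fin N := fun i => (S.orderIsoOfFin hcard i : Fin N) with hg
  have hgmem : ∀ i, g i ∈ S := fun i => (S.orderIsoOfFin hcard i).2
  have hginj : Function.Injective g := by
    intro a b h
    exact (S.orderIsoOfFin hcard).injective (Subtype.ext h)
  set idx : Fin 1 ⊕ Fin k × Fin 2 → Fin (2*k+1) := fun x =>
    match x with
    | Sum.inl _ => ⟨0, by omega⟩
    | Sum.inr (i, j) => ⟨1 + 2*i.val + j.val, by have := i.isLt; have := j.isLt; omega⟩
    with hidx
  have hidxinj : Function.Injective idx := by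
    rintro (a | ⟨i, j⟩) (b | ⟨i', j'⟩) h
    · exact congrArg Sum.inl (Subsingleton.elim a b)
    · have := congrArg Fin.val h; simp only [hidx] at this; omega
    · have := congrArg Fin.val h; simp only [hidx] at this; omega
    · have := congrArg Fin.val h
      simp only [hidx] at this
      have hj := j.isLt; have hj' := j'.isLt
      have : i.val = i'.val ∧ j.val = j'.val := by omega
      have h1 : i = i' := Fin.ext this.1
      have h2 : j = j' := Fin.ext this.2
      rw [h1, h2]
  refine ⟨⟨fun x => g (idx x), ?_⟩, fun a b h => hidxinj (hginj h)⟩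
  intro a b hab
  exact hS.1 (hgmem _) (hgmem _) (fun e => (fan k).ne_of_adj hab (hidxinj (hginj e)))


/-- part index of vertex value `v` in the extremal coloring -/
def pt (n m v : ℕ) : ℕ :=
  if v < 2*n then 0
  else if v < 2*n + (m-1) then 1
  else if v < 2*n + 2*(m-1) then 2
  else if v < 2*n + 2*(m-1) + m/2 then 3
  else 4

/-- red adjacency table between parts -/
def rtab (p q : ℕ) : Prop :=
  p = q ∨ (p=1 ∧ q=2) ∨ (p=2 ∧ q=1) ∨ (p=1 ∧ q=3) ∨ (p=3 ∧ q=1) ∨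
  (p=2 ∧ q=4) ∨ (p=4 ∧ q=2) ∨ (p=3 ∧ q=4) ∨ (p=4 ∧ q=3)

lemma pt_spec (n m v : ℕ) :
    (pt n m v = 0 ∧ v < 2*n) ∨
    (pt n m v = 1 ∧ 2*n ≤ v ∧ v < 2*n + (m-1)) ∨
    (pt n m v = 2 ∧ 2*n + (m-1) ≤ v ∧ v < 2*n + 2*(m-1)) ∨
    (pt n m v = 3 ∧ 2*n + 2*(m-1) ≤ v ∧ v < 2*n + 2*(m-1) + m/2) ∨
    (pt n m v = 4 ∧ 2*n + 2*(m-1) + m/2 ≤ v) := by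
  unfold pt; split_ifs <;> omega

lemma red_helper {N n : ℕ} {C : SimpleGraph (Fin N)} (f : fan n →g C)
    (hf : Function.Injective f) (T : Finset ℕ) (hT : T.card ≤ 2*n)
    (hmem : ∀ v : Fin N, (C.Adj (f (Sum.inl 0)) v ∨ v = f (Sum.inl 0)) → v.val ∈ T) :
    False := by
  classical
  set h := f (Sum.inl 0) with hh
  set A : Finset (Fin N) :=
    insert h ((Finset.univ : Finset (Fin n × Fin 2)).image (fun p => f (Sum.inr p))) with hA
  have hinj2 : Function.Injective (fun p : Fin n × Fin 2 => f (Sum.inr p)) := by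
    intro a b e
    exact Sum.inr_injective (hf e)
  have hnotmem : h ∉ (Finset.univ : Finset (Fin n × Fin 2)).image (fun p => f (Sum.inr p)) := by
    simp only [mem_image]
    rintro ⟨p, -, hp⟩
    exact absurd (hf hp) (by simp)
  have hcardA : A.card = 2*n+1 := by
    rw [hA, card_insert_of_notMem hnotmem, Finset.card_image_of_injective _ hinj2]
    simp; omega
  have hle : A.card ≤ T.card := by
    refine Finset.card_le_card_of_injOn (fun v => v.val) ?_ ?_
    · intro v hv
      rw [hA, Finset.mem_coe, mem_insert, mem_image] at hv
      rcases hv with rfl | ⟨p, -, rfl⟩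
      · exact hmem _ (Or.inr rfl)
      · exact hmem _ (Or.inl (f.map_adj (fan_adj_hub n p)))
    · intro a _ b _ e
      exact Fin.val_injective e
  omega

lemma blue_helper {N m : ℕ} {D : SimpleGraph (Fin N)} (f : fan m →g D)
    (hf : Function.Injective f) (T : Finset ℕ) (hT : T.card < m)
    (hcov : ∀ i : Fin m, (f (Sum.inr (i,0))).val ∈ T ∨ (f (Sum.inr (i,1))).val ∈ T) :
    False := by
  classical
  set g : Fin m → Fin N := fun i =>
    if (f (Sum.inr (i,0))).val ∈ T then f (Sum.inr (i,0)) else f (Sum.inr (i,1)) with hg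
  have hgmem : ∀ i, (g i).val ∈ T := by
    intro i
    rw [hg]
    dsimp only
    split_ifs with hi
    · exact hi
    · exact (hcov i).resolve_left hi
  have hgform : ∀ i, ∃ c : Fin 2, g i = f (Sum.inr (i, c)) := by
    intro i
    rw [hg]
    dsimp only
    split_ifs
    exacts [⟨0, rfl⟩, ⟨1, rfl⟩]
  have hginj : Function.Injective g := by
    intro a b e
    obtain ⟨c, hc⟩ := hgform a
    obtain ⟨d, hd⟩ := hgform b
    rw [hc, hd] at e
    have := Sum.inr_injective (hf e)
    exact (Prod.ext_iff.mp this).1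
  have : m ≤ T.card := by
    have := Finset.card_le_card_of_injOn (s := (Finset.univ : Finset (Fin m))) (t := T)
      (fun i => (g i).val)
      (fun i _ => hgmem i) (fun a _ b _ e => hginj (Fin.val_injective e))
    simpa using this
  omega

def clo (n m p : ℕ) : ℕ :=
  if p = 0 then 2*n+2*(m-1) else if p = 1 then 2*n+2*(m-1)+m/2
  else if p = 2 then 2*n+2*(m-1) else if p = 3 then 2*n+(m-1) else 2*n

def chi (n m p : ℕ) : ℕ :=
  if p = 0 then 2*n+3*m-3 else if p = 1 then 2*n+3*m-3
  else if p = 2 then 2*n+2*(m-1)+m/2 else if p = 3 then 2*n+2*(m-1) else 2*n+(m-1)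

lemma pt_le (n m v : ℕ) : pt n m v ≤ 4 := by
  unfold pt; split_ifs <;> omega

lemma rtab_iff (p q : ℕ) (hp : p ≤ 4) (hq : q ≤ 4) :
    rtab p q ↔ (p = q ∨ (0 < p ∧ 0 < q ∧ p + q ≠ 5)) := by
  unfold rtab
  interval_cases p <;> interval_cases q <;> omega

set_option maxHeartbeats 1000000 in
lemma blue_card (n m p : ℕ) (hm : 4 ≤ m) : chi n m p - clo n m p < m := by
  unfold clo chi; split_ifs <;> omega

set_option maxHeartbeats 1000000 in
lemma blue_cover (n m hv hx hy : ℕ)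
    (h2 : ¬ rtab (pt n m hv) (pt n m hx)) (h3 : ¬ rtab (pt n m hv) (pt n m hy))
    (h4 : ¬ rtab (pt n m hx) (pt n m hy))
    (hxN : hx < 2*n+3*m-3) (hyN : hy < 2*n+3*m-3) :
    (clo n m (pt n m hv) ≤ hx ∧ hx < chi n m (pt n m hv)) ∨
    (clo n m (pt n m hv) ≤ hy ∧ hy < chi n m (pt n m hv)) := by
  have s1 := pt_spec n m hv
  have s2 := pt_spec n m hx
  have s3 := pt_spec n m hy
  rw [rtab_iff _ _ (pt_le n m hv) (pt_le n m hx)] at h2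
  rw [rtab_iff _ _ (pt_le n m hv) (pt_le n m hy)] at h3
  rw [rtab_iff _ _ (pt_le n m hx) (pt_le n m hy)] at h4
  rcases s1 with ⟨e,hb⟩|⟨e,hb⟩|⟨e,hb⟩|⟨e,hb⟩|⟨e,hb⟩ <;>
    rw [e] <;> simp only [clo, chi] <;> norm_num <;> omega

def rlo1 (n m p : ℕ) : ℕ := if p = 0 then 0 else if p = 4 then 2*n+(m-1) else 2*n

def rhi1 (n m p : ℕ) : ℕ :=
  if p = 0 then 2*n else if p = 1 then 2*n+2*(m-1)+m/2
  else if p = 2 then 2*n+2*(m-1) else if p = 3 then 2*n+(m-1) else 2*n+3*m-3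

def rlo2 (n m p : ℕ) : ℕ := if p = 2 then 2*n+2*(m-1)+m/2 else if p = 3 then 2*n+2*(m-1) else 0

def rhi2 (n m p : ℕ) : ℕ := if p = 2 then 2*n+3*m-3 else if p = 3 then 2*n+3*m-3 else 0

lemma red_card (n m p : ℕ) (hp : p ≤ 4) (hm : 4 ≤ m) (h1 : 5 * m < 4 * n + 4) :
    (rhi1 n m p - rlo1 n m p) + (rhi2 n m p - rlo2 n m p) ≤ 2*n := by
  unfold rlo1 rhi1 rlo2 rhi2; split_ifs <;> omega

set_option maxHeartbeats 1000000 in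
lemma red_cover (n m hv x : ℕ) (hxN : x < 2*n+3*m-3)
    (hrt : rtab (pt n m hv) (pt n m x) ∨ rtab (pt n m x) (pt n m hv)) :
    (rlo1 n m (pt n m hv) ≤ x ∧ x < rhi1 n m (pt n m hv)) ∨
    (rlo2 n m (pt n m hv) ≤ x ∧ x < rhi2 n m (pt n m hv)) := by
  have s1 := pt_spec n m hv
  have s2 := pt_spec n m x
  rw [rtab_iff _ _ (pt_le n m hv) (pt_le n m x), rtab_iff _ _ (pt_le n m x) (pt_le n m hv)] at hrt
  rcases s1 with ⟨e,hb⟩|⟨e,hb⟩|⟨e,hb⟩|⟨e,hb⟩|⟨e,hb⟩ <;>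
    rw [e] <;> simp only [rlo1, rhi1, rlo2, rhi2] <;> norm_num <;> omega

lemma not_ramsey (m n : ℕ) (hm : 4 ≤ m) (h1 : 5 * m < 4 * n + 4) :
    ¬ RamseyProp (2*n+3*m-3) (fan n) (fan m) := by
  intro hR
  classical
  set N := 2*n+3*m-3 with hN
  set C : SimpleGraph (Fin N) :=
    SimpleGraph.fromRel (fun x y => rtab (pt n m x.val) (pt n m y.val)) with hC
  rcases hR C with ⟨f, hf⟩ | ⟨f, hf⟩
  · -- no red fan n
    set h := f (Sum.inl 0) with hh
    set p := pt n m h.val with hp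
    refine red_helper f hf
      (Finset.Ico (rlo1 n m p) (rhi1 n m p) ∪ Finset.Ico (rlo2 n m p) (rhi2 n m p)) ?_ ?_
    · have hc := Finset.card_union_le (Finset.Ico (rlo1 n m p) (rhi1 n m p))
        (Finset.Ico (rlo2 n m p) (rhi2 n m p))
      have hd := red_card n m p (hp ▸ pt_le n m h.val) hm h1
      rw [Nat.card_Ico, Nat.card_Ico] at hc
      omega
    · intro v hv
      have hvN : v.val < 2*n+3*m-3 := v.isLt
      have hrt : rtab (pt n m h.val) (pt n m v.val) ∨ rtab (pt n m v.val) (pt n m h.val) := by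
        rcases hv with hadj | rfl
        · exact ((SimpleGraph.fromRel_adj _ _ _).mp hadj).2
        · left; unfold rtab; left; rfl
      have := red_cover n m h.val v.val hvN hrt
      simp only [Finset.mem_union, Finset.mem_Ico]
      exact this
  · -- no blue fan m
    set h := f (Sum.inl 0) with hh
    set p := pt n m h.val with hp
    have key : ∀ a b : Fin N, Cᶜ.Adj a b → ¬ rtab (pt n m a.val) (pt n m b.val) := by
      intro a b hab
      rw [compl_adj] at hab
      obtain ⟨hne, hnadj⟩ := hab
      exact fun hr => hnadj ((SimpleGraph.fromRel_adj _ _ _).mpr ⟨hne, Or.inl hr⟩)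
    refine blue_helper f hf (Finset.Ico (clo n m p) (chi n m p)) ?_ ?_
    · rw [Nat.card_Ico]
      exact blue_card n m p hm
    · intro i
      have hx := key _ _ (f.map_adj (fan_adj_hub m (i,0)))
      have hy := key _ _ (f.map_adj (fan_adj_hub m (i,1)))
      have hxy := key _ _ (f.map_adj (fan_adj_pair m i))
      have hxN : (f (Sum.inr (i,0))).val < 2*n+3*m-3 := (f (Sum.inr (i,0))).isLt
      have hyN : (f (Sum.inr (i,1))).val < 2*n+3*m-3 := (f (Sum.inr (i,1))).isLt
      have := blue_cover n m h.val (f (Sum.inr (i,0))).val (f (Sum.inr (i,1))).val hx hy hxy hxN hyN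
      simp only [Finset.mem_Ico]
      exact this

lemma ramseyProp_mono {α β : Type*} {G : SimpleGraph α} {H : SimpleGraph β} {k l : ℕ}
    (hkl : k ≤ l) (h : RamseyProp k G H) : RamseyProp l G H := by
  intro C
  have einj : Function.Injective (Fin.castLE hkl) := by
    intro a b e
    exact Fin.ext (by simpa using congrArg Fin.val e)
  rcases h (C.comap (Fin.castLE hkl)) with ⟨f, hf⟩ | ⟨f, hf⟩
  · refine Or.inl ⟨⟨fun x => Fin.castLE hkl (f x), ?_⟩, fun a b e => hf (einj e)⟩
    intro a b hab
    exact f.map_adj hab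
  · refine Or.inr ⟨⟨fun x => Fin.castLE hkl (f x), ?_⟩, fun a b e => hf (einj e)⟩
    intro a b hab
    have h2 := f.map_adj hab
    rw [compl_adj] at h2 ⊢
    rw [comap_adj] at h2
    exact ⟨fun e => h2.1 (einj e), h2.2⟩

end RamseyAux

theorem stmt_15 (m n : ℕ) (hm : 4 ≤ m) (h1 : 5 * m < 4 * n + 4) (h2 : 2 * n + 4 ≤ 3 * m) :
    2 * n + 3 * m - 2 ≤ ramseyNumber (fan n) (fan m) := by
  have hex : ∃ N0, RamseyProp N0 (fan n) (fan m) := by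
    obtain ⟨N0, hN0⟩ := ramsey_exists (2*n+1) (2*m+1)
    refine ⟨N0, fun C => ?_⟩
    classical
    rcases hN0 (Fin N0) (by simp) C with ⟨S, hS⟩ | ⟨S, hS⟩
    · exact Or.inl (contains_fan_of_clique hS)
    · exact Or.inr (contains_fan_of_clique hS)
  obtain ⟨N0, hN0⟩ := hex
  refine le_csInf ⟨N0, hN0⟩ ?_
  intro k hk
  by_contra hlt
  push_neg at hlt
  have hk' : RamseyProp k (fan n) (fan m) := hk
  exact not_ramsey m n hm h1 (ramseyProp_mono (by omega) hk')
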